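/- arXiv:2211.06802 — 5 statements merged into one kernel-verified Lean document; each statement's English description precedes it below -/
import Mathlib

section
/- Let u ∈ S_n, η ∈ S_n an (m+1)-cycle with m ≥ 2 and u ≤_k u·η. Let a ∈ M(η) attain the minimum of {u(i) : i ∈ M(η)}. Then a ≤ k < η⁻¹(a), and: u(η⁻¹(a)) < u(η(a)) if and only if u → u·t_{a, η⁻¹(a)} is a k-edge with label u(a) and u·t_{a, η⁻¹(a)} ≤_k u·η. Moreover, writing u' = u·t_{a,η⁻¹(a)} and u·η = u'·η', the permutation η' is an m-cycle with ht_k(η') = ht_k(η) and u'M(η') = uM(η) ∖ {u(a)}. -/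
/-- A `k`-edge in the Bruhat graph of `S_n`. -/
def kEdge {n : ℕ} (k : ℕ) (u w : Equiv.Perm (Fin n)) : Prop :=
  ∃ a b : Fin n, a.val < k ∧ k ≤ b.val ∧ u a < u b ∧ w = u * Equiv.swap a b

/-- The extended `k`-Bruhat order. -/
def extKBruhat {n : ℕ} (k : ℕ) : Equiv.Perm (Fin n) → Equiv.Perm (Fin n) → Prop :=
  Relation.ReflTransGen (kEdge k)


open Equiv Finset

lemma kEdge_le {n k : ℕ} {u w : Equiv.Perm (Fin n)} (h : kEdge k u w) :
    (∀ i : Fin n, i.val < k → u i ≤ w i) ∧ (∀ i : Fin n, k ≤ i.val → w i ≤ u i) := by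
  obtain ⟨a, b, hak, hkb, hab, rfl⟩ := h
  constructor <;> intro i hi
  · rcases eq_or_ne i a with rfl | hia
    · rw [Perm.mul_apply, Equiv.swap_apply_left]; exact hab.le
    · have hib : i ≠ b := by intro h; subst h; omega
      rw [Perm.mul_apply, Equiv.swap_apply_of_ne_of_ne hia hib]
  · rcases eq_or_ne i b with rfl | hib
    · rw [Perm.mul_apply, Equiv.swap_apply_right]; exact hab.le
    · have hia : i ≠ a := by intro h; subst h; omega
      rw [Perm.mul_apply, Equiv.swap_apply_of_ne_of_ne hia hib]

lemma extKBruhat_le {n k : ℕ} {u w : Equiv.Perm (Fin n)} (h : extKBruhat k u w) :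
    (∀ i : Fin n, i.val < k → u i ≤ w i) ∧ (∀ i : Fin n, k ≤ i.val → w i ≤ u i) := by
  induction h with
  | refl => exact ⟨fun i _ => le_refl _, fun i _ => le_refl _⟩
  | tail _ e ih =>
    obtain ⟨ih1, ih2⟩ := ih
    obtain ⟨e1, e2⟩ := kEdge_le e
    exact ⟨fun i hi => (ih1 i hi).trans (e1 i hi), fun i hi => (e2 i hi).trans (ih2 i hi)⟩

lemma extKBruhat_of_le {n k : ℕ} (w : Equiv.Perm (Fin n)) :
    ∀ (N : ℕ) (u : Equiv.Perm (Fin n)),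
      (∀ i : Fin n, i.val < k → u i ≤ w i) → (∀ i : Fin n, k ≤ i.val → w i ≤ u i) →
      (∑ i : Fin n, Nat.dist (u i).val (w i).val) = N → extKBruhat k u w := by
  intro N
  induction N using Nat.strong_induction_on with
  | _ N ih =>
  intro u h1 h2 hN
  by_cases huw : u = w
  · subst huw; exact Relation.ReflTransGen.refl
  have hexa : ∃ a : Fin n, a.val < k ∧ u a < w a := by
      by_contra hno
      push_neg at hno
      have hL : ∀ i : Fin n, i.val < k → u i = w i :=
        fun i hi => le_antisymm (h1 i hi) (hno i hi)
      apply huw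
      have hsum : ∑ i : Fin n, (u i).val = ∑ i : Fin n, (w i).val := by
        rw [Equiv.sum_comp u (fun x : Fin n => x.val), Equiv.sum_comp w (fun x : Fin n => x.val)]
      have hLs : ∑ i ∈ univ.filter (fun i : Fin n => i.val < k), (u i).val
          = ∑ i ∈ univ.filter (fun i : Fin n => i.val < k), (w i).val :=
        Finset.sum_congr rfl fun i hi => by
          rw [hL i (by simpa using hi)]
      have hsplitu := Finset.sum_filter_add_sum_filter_not (univ : Finset (Fin n))
        (fun i : Fin n => i.val < k) (fun i => (u i).val)
      have hsplitw := Finset.sum_filter_add_sum_filter_not (univ : Finset (Fin n))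
        (fun i : Fin n => i.val < k) (fun i => (w i).val)
      have hRs : ∑ i ∈ univ.filter (fun i : Fin n => ¬ i.val < k), (u i).val
          = ∑ i ∈ univ.filter (fun i : Fin n => ¬ i.val < k), (w i).val := by omega
      have hR : ∀ i : Fin n, ¬ i.val < k → u i = w i := by
        by_contra hcon
        push_neg at hcon
        obtain ⟨j, hj1, hj2⟩ := hcon
        have hjlt : w j < u j := lt_of_le_of_ne (h2 j hj1) (fun h => hj2 h.symm)
        have hstrict : ∑ i ∈ univ.filter (fun i : Fin n => ¬ i.val < k), (w i).val
            < ∑ i ∈ univ.filter (fun i : Fin n => ¬ i.val < k), (u i).val := by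
          apply Finset.sum_lt_sum
          · intro i hi
            exact h2 i (le_of_not_gt (Finset.mem_filter.mp hi).2)
          · exact ⟨j, Finset.mem_filter.mpr ⟨Finset.mem_univ _, by omega⟩, hjlt⟩
        omega
      ext i
      rcases lt_or_ge i.val k with h | h
      · rw [hL i h]
      · rw [hR i (by omega)]
  obtain ⟨a0, ha0⟩ := hexa
  obtain ⟨a, haD, hamax⟩ := Finset.exists_max_image
    (univ.filter fun i : Fin n => i.val < k ∧ u i < w i) (fun i => (u i).val)
    ⟨a0, by simp [ha0.1, ha0.2]⟩
  have hak : a.val < k := (Finset.mem_filter.mp haD).2.1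
  have haw : u a < w a := (Finset.mem_filter.mp haD).2.2
  set J : Finset (Fin n) := Finset.Ioc (u a) (w a) with hJ
  have hcard : ∀ v : Equiv.Perm (Fin n),
      (univ.filter fun i => v i ∈ J).card = J.card := by
    intro v
    have : (univ.filter fun i => v i ∈ J) = J.image v.symm := by
      ext i
      simp only [Finset.mem_filter, Finset.mem_univ, true_and, Finset.mem_image]
      constructor
      · intro h; exact ⟨v i, h, by simp⟩
      · rintro ⟨j, hj, rfl⟩; simpa using hj
    rw [this, Finset.card_image_of_injective _ (Equiv.injective _)]
  have hexb : ∃ b : Fin n, k ≤ b.val ∧ u b ∈ J ∧ w b ∉ J := by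
    by_contra hno
    push_neg at hno
    have hsub : (univ.filter fun i => u i ∈ J) ⊆ (univ.filter fun i => w i ∈ J) := by
      intro i hi
      have hiJ : u i ∈ J := (Finset.mem_filter.mp hi).2
      rcases lt_or_ge i.val k with hik | hik
      · have hlt : u a < u i := (Finset.mem_Ioc.mp hiJ).1
        have : ¬ u i < w i := by
          intro hcon
          have := hamax i (Finset.mem_filter.mpr ⟨Finset.mem_univ _, hik, hcon⟩)
          exact absurd hlt (by rw [Fin.lt_def]; omega)
        have : u i = w i := le_antisymm (h1 i hik) (not_lt.mp this)
        exact Finset.mem_filter.mpr ⟨Finset.mem_univ _, this ▸ hiJ⟩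
      · exact Finset.mem_filter.mpr ⟨Finset.mem_univ _, hno i hik hiJ⟩
    have hss : (univ.filter fun i => u i ∈ J) ⊂ (univ.filter fun i => w i ∈ J) := by
      refine (Finset.ssubset_iff_of_subset hsub).mpr ⟨a, ?_, ?_⟩
      · exact Finset.mem_filter.mpr ⟨Finset.mem_univ _, Finset.mem_Ioc.mpr ⟨haw, le_refl _⟩⟩
      · intro hcon
        have := (Finset.mem_filter.mp hcon).2
        exact absurd (Finset.mem_Ioc.mp this).1 (lt_irrefl _)
    have := Finset.card_lt_card hss
    rw [hcard u, hcard w] at this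
    exact absurd this (lt_irrefl _)
  obtain ⟨b, hbk, hubJ, hwbJ⟩ := hexb
  have hub1 : u a < u b := (Finset.mem_Ioc.mp hubJ).1
  have hub2 : u b ≤ w a := (Finset.mem_Ioc.mp hubJ).2
  have hwb : w b ≤ u a := by
    have h2b : w b ≤ u b := h2 b hbk
    by_contra hcon
    exact hwbJ (Finset.mem_Ioc.mpr ⟨not_le.mp hcon, h2b.trans hub2⟩)
  have hba : b ≠ a := fun h => by subst h; omega
  set u' := u * Equiv.swap a b with hu'
  have hva : u' a = u b := by rw [hu', Perm.mul_apply, Equiv.swap_apply_left]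
  have hvb : u' b = u a := by rw [hu', Perm.mul_apply, Equiv.swap_apply_right]
  have hvo : ∀ i : Fin n, i ≠ a → i ≠ b → u' i = u i := by
    intro i hia hib
    rw [hu', Perm.mul_apply, Equiv.swap_apply_of_ne_of_ne hia hib]
  have h1' : ∀ i : Fin n, i.val < k → u' i ≤ w i := by
    intro i hi
    rcases eq_or_ne i a with rfl | hia
    · rw [hva]; exact hub2
    · have hib : i ≠ b := fun h => by subst h; omega
      rw [hvo i hia hib]; exact h1 i hi
  have h2' : ∀ i : Fin n, k ≤ i.val → w i ≤ u' i := by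
    intro i hi
    rcases eq_or_ne i b with rfl | hib
    · rw [hvb]; exact hwb
    · have hia : i ≠ a := fun h => by subst h; omega
      rw [hvo i hia hib]; exact h2 i hi
  have hsplit : ∀ f : Fin n → ℕ,
      ∑ i : Fin n, f i = f a + (f b + ∑ i ∈ (univ.erase a).erase b, f i) := by
    intro f
    rw [← Finset.add_sum_erase _ f (Finset.mem_univ a),
      ← Finset.add_sum_erase _ f (Finset.mem_erase.mpr ⟨hba, Finset.mem_univ b⟩)]
  have hrest : ∑ i ∈ (univ.erase a).erase b, Nat.dist (u' i).val (w i).val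
      = ∑ i ∈ (univ.erase a).erase b, Nat.dist (u i).val (w i).val := by
    apply Finset.sum_congr rfl
    intro i hi
    have hib := (Finset.mem_erase.mp hi).1
    have hia := (Finset.mem_erase.mp (Finset.mem_erase.mp hi).2).1
    rw [hvo i hia hib]
  have hlt : (∑ i : Fin n, Nat.dist (u' i).val (w i).val) < N := by
    rw [← hN, hsplit (fun i => Nat.dist (u' i).val (w i).val),
      hsplit (fun i => Nat.dist (u i).val (w i).val), hrest, hva, hvb]
    have e1 : (u a).val < (u b).val := hub1
    have e2 : (u b).val ≤ (w a).val := hub2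
    have e3 : (w b).val ≤ (u a).val := hwb
    simp only [Nat.dist]
    omega
  exact Relation.ReflTransGen.head ⟨a, b, hak, hbk, hub1, rfl⟩
    (ih _ hlt u' h1' h2' rfl)


/-- Let `η` be an `(m+1)`-cycle with `m ≥ 2`, `u ≤_k u·η`, and let `a ∈ M(η)`
attain `min{u(i) : i ∈ M(η)}`. Then `a ≤ k < η⁻¹(a)`, and
`u(η⁻¹(a)) < u(η(a))` iff `u → u·t_{a,η⁻¹(a)}` is a `k`-edge (with label `u a`,
i.e. `u a < u (η⁻¹ a)`) and `u·t_{a,η⁻¹(a)} ≤_k u·η`. Moreover, for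
`u' = u·t_{a,η⁻¹(a)}` and `η' = t_{a,η⁻¹(a)}·η` (so that `u'·η' = u·η`),
`η'` is an `m`-cycle with `ht_k(η') = ht_k(η)` and `u'M(η') = uM(η) ∖ {u(a)}`. -/
theorem stmt13 (n k m : ℕ) (hm : 2 ≤ m) (u η : Equiv.Perm (Fin n))
    (hcyc : η.IsCycle) (hcard : η.support.card = m + 1)
    (hle : extKBruhat k u (u * η))
    (a : Fin n) (ha : η a ≠ a) (hmin : ∀ i : Fin n, η i ≠ i → u a ≤ u i) :
    a.val < k ∧ k ≤ (η⁻¹ a).val ∧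
      (u (η⁻¹ a) < u (η a) ↔
        (u a < u (η⁻¹ a) ∧
          extKBruhat k (u * Equiv.swap a (η⁻¹ a)) (u * η))) ∧
      (Equiv.swap a (η⁻¹ a) * η).IsCycle ∧
      (Equiv.swap a (η⁻¹ a) * η).support.card = m ∧
      (Finset.univ.filter fun i : Fin n =>
          i.val < k ∧ (Equiv.swap a (η⁻¹ a) * η) i ≠ i).card - 1 =
        (Finset.univ.filter fun i : Fin n => i.val < k ∧ η i ≠ i).card - 1 ∧
      (⇑(u * Equiv.swap a (η⁻¹ a))) '' {i : Fin n | (Equiv.swap a (η⁻¹ a) * η) i ≠ i} =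
        ((⇑u) '' {i : Fin n | η i ≠ i}) \ {u a} := by
  obtain ⟨h1, h2⟩ := extKBruhat_le hle
  set b := η⁻¹ a with hbdef
  have hba : η b = a := Equiv.apply_symm_apply η a
  have hbne : b ≠ a := fun h => ha (h ▸ hba)
  have hsuppb : η b ≠ b := by rw [hba]; exact Ne.symm hbne
  have h2a : η (η a) ≠ a := by
    intro h2e
    have hpow : ∀ i : ℕ, (η ^ i) a = a ∨ (η ^ i) a = η a := by
      intro i
      induction i with
      | zero => left; simp
      | succ j ihj =>
        rw [pow_succ', Equiv.Perm.mul_apply]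
        rcases ihj with h | h
        · right; rw [h]
        · left; rw [h, h2e]
    have hsub : η.support ⊆ {a, η a} := by
      intro x hx
      obtain ⟨i, hi⟩ := hcyc.exists_pow_eq ha (Equiv.Perm.mem_support.mp hx)
      rcases hpow i with h | h
      · rw [← hi, h]; simp
      · rw [← hi, h]; simp
    have hle2 := Finset.card_le_card hsub
    have h2card : ({a, η a} : Finset (Fin n)).card ≤ 2 :=
      (Finset.card_insert_le _ _).trans (by simp)
    omega
  have hηab : η a ≠ b := fun h => h2a (by rw [h, hba])
  have hcyc' : (Equiv.swap a b * η).IsCycle := by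
    have := hcyc.swap_mul (x := b) hsuppb (by rw [hba]; exact hηab)
    simpa [hba, Equiv.swap_comm b a] using this
  have hsupp' : (Equiv.swap a b * η).support = η.support \ {b} := by
    have := Equiv.Perm.support_swap_mul_eq η b (by rw [hba]; exact hηab)
    simpa [hba, Equiv.swap_comm b a] using this
  have hbmem : b ∈ η.support := Equiv.Perm.mem_support.mpr hsuppb
  have hcard' : (Equiv.swap a b * η).support.card = m := by
    rw [hsupp', ← Finset.erase_eq, Finset.card_erase_of_mem hbmem, hcard]
    omega
  have hak : a.val < k := by
    by_contra hcon
    have hthis := h2 a (le_of_not_gt hcon)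
    rw [Equiv.Perm.mul_apply] at hthis
    have hmin' := hmin (η a) (fun h => ha (η.injective h))
    exact ha (u.injective (le_antisymm hthis hmin'))
  have hkb : k ≤ b.val := by
    by_contra hcon
    have hthis := h1 b (lt_of_not_ge hcon)
    rw [Equiv.Perm.mul_apply, hba] at hthis
    have hmin' := hmin b hsuppb
    exact hbne (u.injective (le_antisymm hthis hmin'))
  have huab : u a < u b := by
    have hthis := h2 b hkb
    rw [Equiv.Perm.mul_apply, hba] at hthis
    exact lt_of_le_of_ne hthis (fun h => hbne (u.injective h.symm))
  have hiff : u b < u (η a) ↔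
      (u a < u b ∧ extKBruhat k (u * Equiv.swap a b) (u * η)) := by
    constructor
    · intro hlt
      refine ⟨huab, ?_⟩
      refine extKBruhat_of_le (u * η) _ (u * Equiv.swap a b) ?_ ?_ rfl
      · intro i hi
        rcases eq_or_ne i a with rfl | hia
        · rw [Equiv.Perm.mul_apply, Equiv.swap_apply_left, Equiv.Perm.mul_apply]
          exact hlt.le
        · have hib : i ≠ b := fun h => by subst h; omega
          rw [Equiv.Perm.mul_apply, Equiv.swap_apply_of_ne_of_ne hia hib]
          exact h1 i hi
      · intro i hi
        rcases eq_or_ne i b with rfl | hib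
        · simp only [Equiv.Perm.mul_apply]
          rw [Equiv.swap_apply_right, hba]
        · have hia : i ≠ a := fun h => by subst h; omega
          simp only [Equiv.Perm.mul_apply]
          rw [Equiv.swap_apply_of_ne_of_ne hia hib]
          exact h2 i hi
    · rintro ⟨-, hch⟩
      obtain ⟨g1, -⟩ := extKBruhat_le hch
      have hthis := g1 a hak
      rw [Equiv.Perm.mul_apply, Equiv.swap_apply_left, Equiv.Perm.mul_apply] at hthis
      exact lt_of_le_of_ne hthis (fun h => hηab (u.injective h).symm)
  have key : ∀ i : Fin n, i ≠ b → ((Equiv.swap a b * η) i ≠ i ↔ η i ≠ i) := by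
    intro i hib
    rw [← Equiv.Perm.mem_support, hsupp', Finset.mem_sdiff, Finset.mem_singleton,
      Equiv.Perm.mem_support]
    exact ⟨fun h => h.1, fun h => ⟨h, hib⟩⟩
  have hfe : (Finset.univ.filter fun i : Fin n =>
        i.val < k ∧ (Equiv.swap a b * η) i ≠ i)
      = Finset.univ.filter fun i : Fin n => i.val < k ∧ η i ≠ i := by
    ext i
    simp only [Finset.mem_filter, Finset.mem_univ, true_and]
    constructor
    · rintro ⟨hik, hne⟩
      exact ⟨hik, (key i (fun h => by subst h; omega)).mp hne⟩
    · rintro ⟨hik, hne⟩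
      exact ⟨hik, (key i (fun h => by subst h; omega)).mpr hne⟩
  have hset : {i : Fin n | (Equiv.swap a b * η) i ≠ i} = {i : Fin n | η i ≠ i} \ {b} := by
    ext i
    simp only [Set.mem_setOf_eq, Set.mem_diff, Set.mem_singleton_iff]
    rw [← Equiv.Perm.mem_support, hsupp', Finset.mem_sdiff, Finset.mem_singleton,
      Equiv.Perm.mem_support]
  have hswapimg : (⇑(Equiv.swap a b)) '' ({i : Fin n | η i ≠ i} \ {b})
      = {i : Fin n | η i ≠ i} \ {a} := by
    ext y
    simp only [Set.mem_image, Set.mem_diff, Set.mem_setOf_eq, Set.mem_singleton_iff]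
    constructor
    · rintro ⟨x, ⟨hx, hxb⟩, rfl⟩
      rcases eq_or_ne x a with rfl | hxa
      · rw [Equiv.swap_apply_left]; exact ⟨hsuppb, hbne⟩
      · rw [Equiv.swap_apply_of_ne_of_ne hxa hxb]; exact ⟨hx, hxa⟩
    · rintro ⟨hy, hya⟩
      rcases eq_or_ne y b with rfl | hyb
      · exact ⟨a, ⟨ha, Ne.symm hbne⟩, Equiv.swap_apply_left a b⟩
      · exact ⟨y, ⟨hy, hyb⟩, Equiv.swap_apply_of_ne_of_ne hya hyb⟩
  have himg : (⇑(u * Equiv.swap a b)) '' {i : Fin n | (Equiv.swap a b * η) i ≠ i}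
      = ((⇑u) '' {i : Fin n | η i ≠ i}) \ {u a} := by
    rw [hset, Equiv.Perm.coe_mul, Set.image_comp, hswapimg,
      Set.image_diff u.injective, Set.image_singleton]
  exact ⟨hak, hkb, hiff, hcyc', hcard', by rw [hfe], himg⟩
end

section
/- Let 1 ≤ ℓ ≤ r, let ζ be a primitive r-th root of unity, and let a_1, ..., a_ℓ be distinct integers in {0, 1, ..., r−1}. Then for every i with r − ℓ < i < r, the complete homogeneous symmetric polynomial evaluates to zero: h_i(ζ^{a_1}, ..., ζ^{a_ℓ}) = 0. -/
open Polynomial PowerSeries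

/-- geometric series is inverse of `1 - y X`. -/
lemma aux_geom (y : ℂ) :
    (1 - PowerSeries.C y * PowerSeries.X) * PowerSeries.mk (fun n => y ^ n) = 1 := by
  ext n
  rw [sub_mul, one_mul, mul_assoc, map_sub, PowerSeries.coeff_C_mul]
  cases n with
  | zero => simp
  | succ n => simp [PowerSeries.coeff_succ_X_mul, pow_succ, mul_comm]

/-- evaluation of complete homogeneous symmetric polynomial as coefficient of a
product of geometric series. -/
lemma aux_hsymm_coeff (ℓ : ℕ) (y : Fin ℓ → ℂ) (n : ℕ) :
    PowerSeries.coeff n (∏ j, PowerSeries.mk (fun k => y j ^ k)) =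
      MvPolynomial.eval y (MvPolynomial.hsymm (Fin ℓ) ℂ n) := by
  classical
  rw [PowerSeries.coeff_prod, MvPolynomial.hsymm, map_sum]
  refine Finset.sum_bij'
    (i := fun l hl => (⟨Finsupp.toMultiset l, by
      rw [Finsupp.card_toMultiset]
      have h := (Finset.mem_finsuppAntidiag.mp hl).1
      rw [← h, Finsupp.sum_fintype _ _ (fun _ => rfl)]
      rfl⟩ : Sym (Fin ℓ) n))
    (j := fun s _ => Multiset.toFinsupp s.1)
    (fun l hl => Finset.mem_univ _)
    (fun s hs => by
      rw [Finset.mem_finsuppAntidiag]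
      refine ⟨?_, Finset.subset_univ _⟩
      have := Multiset.toFinsupp_sum_eq s.1
      rw [Finsupp.sum_fintype _ _ (fun _ => rfl)] at this
      exact this.trans s.2)
    (fun l hl => by simp [Multiset.toFinsupp_toMultiset])
    (fun s hs => Sym.ext (by simp [Finsupp.toMultiset_toFinsupp]))
    (fun l hl => ?_)
  simp only [PowerSeries.coeff_mk]
  rw [show MvPolynomial.eval y
        ((Multiset.map MvPolynomial.X (Finsupp.toMultiset l : Multiset (Fin ℓ))).prod)
      = ((Finsupp.toMultiset l : Multiset (Fin ℓ)).map y).prod by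
    rw [map_multiset_prod, Multiset.map_map]
    exact congrArg _ (Multiset.map_congr rfl fun x _ => MvPolynomial.eval_X x)]
  rw [Finset.prod_multiset_map_count]
  rw [← Finset.prod_subset
    (Finset.subset_univ ((Finsupp.toMultiset l : Multiset (Fin ℓ)).toFinset))
    (by intro x _ hx; simp at hx; simp [hx])]
  refine Finset.prod_congr rfl fun j _ => ?_
  simp

/-- the series `∑ X^{rk}` is inverse of `1 - X^r`. -/
lemma aux_inv_one_sub_pow (r : ℕ) (hr : 0 < r) :
    ((1 : PowerSeries ℂ) - PowerSeries.X ^ r) *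
      PowerSeries.mk (fun n => if r ∣ n then (1 : ℂ) else 0) = 1 := by
  ext n
  rw [sub_mul, one_mul, map_sub, PowerSeries.coeff_X_pow_mul']
  by_cases hn : r ≤ n
  · have h1 : ¬ n = 0 := by omega
    have h2 : (r ∣ n) ↔ (r ∣ n - r) := by
      constructor
      · intro h; exact (Nat.dvd_sub h dvd_rfl)
      · intro h; have := Nat.dvd_add h (dvd_refl r); rwa [Nat.sub_add_cancel hn] at this
    simp [hn, h1, ← h2, PowerSeries.coeff_one]
  · by_cases h0 : n = 0
    · simp [hn, h0, PowerSeries.coeff_one]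
      omega
    · have h2 : ¬ r ∣ n := fun hd => hn (Nat.le_of_dvd (Nat.pos_of_ne_zero h0) hd)
      simp [hn, h0, h2, PowerSeries.coeff_one]

/-- reverse of `X - C y`. -/
lemma aux_reverse_X_sub_C (y : ℂ) :
    (Polynomial.X - Polynomial.C y).reverse = 1 - Polynomial.C y * Polynomial.X := by
  rw [Polynomial.reverse, Polynomial.natDegree_X_sub_C, sub_eq_add_neg, ← Polynomial.C_neg,
    Polynomial.reflect_add, Polynomial.reflect_C, Polynomial.reflect_one_X, map_neg]
  ring

/-- Let `1 ≤ ℓ ≤ r`, `ζ` a primitive `r`-th root of unity, and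
`a_1,…,a_ℓ` distinct integers in `{0,…,r−1}`. Then for `r − ℓ < i < r`,
the complete homogeneous symmetric polynomial `h_i(ζ^{a_1},…,ζ^{a_ℓ}) = 0`. -/
theorem stmt14 (r ℓ : ℕ) (hℓ1 : 1 ≤ ℓ) (hℓr : ℓ ≤ r)
    (ζ : ℂ) (hζ : IsPrimitiveRoot ζ r)
    (a : Fin ℓ → ℕ) (ha : Function.Injective a) (har : ∀ j, a j < r)
    (i : ℕ) (h1 : r - ℓ < i) (h2 : i < r) :
    MvPolynomial.eval (fun j => ζ ^ a j) (MvPolynomial.hsymm (Fin ℓ) ℂ i) = 0 := by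
  classical
  have hr : 0 < r := lt_of_le_of_lt (Nat.zero_le _) h2
  set y : Fin ℓ → ℂ := fun j => ζ ^ a j with hy
  have hyinj : Function.Injective y := fun j k h => ha (hζ.pow_inj (har j) (har k) h)
  -- the polynomial p = X^r - 1 and q = ∏ (X - y j)
  set p : ℂ[X] := Polynomial.X ^ r - Polynomial.C 1 with hp
  have hp0 : p ≠ 0 := Polynomial.X_pow_sub_C_ne_zero hr 1
  set q : ℂ[X] := ∏ j, (Polynomial.X - Polynomial.C (y j)) with hq
  -- q divides p
  have hdvd : q ∣ p := by
    have hle : (Finset.univ.val.map y) ≤ p.roots := by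
      rw [Multiset.le_iff_count]
      intro x
      by_cases hx : x ∈ Finset.univ.val.map y
      · have hnd : (Finset.univ.val.map y).Nodup :=
          Finset.univ.nodup.map hyinj
        rw [Multiset.count_eq_one_of_mem hnd hx]
        refine Multiset.one_le_count_iff_mem.mpr ?_
        obtain ⟨j, _, rfl⟩ := Multiset.mem_map.mp hx
        rw [Polynomial.mem_roots hp0]
        simp only [Polynomial.IsRoot, hp, Polynomial.eval_sub, Polynomial.eval_pow,
          Polynomial.eval_X, Polynomial.eval_C, hy]
        rw [← pow_mul, mul_comm, pow_mul, hζ.pow_eq_one, one_pow, sub_self]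
      · rw [Multiset.count_eq_zero_of_notMem hx]
        exact Nat.zero_le _
    have h := (Multiset.prod_X_sub_C_dvd_iff_le_roots hp0 (Finset.univ.val.map y)).mpr hle
    rw [hq, Finset.prod_eq_multiset_prod]
    simpa [Multiset.map_map, Function.comp_def] using h
  obtain ⟨g', hg'⟩ := hdvd
  have hq0 : q ≠ 0 := by
    rw [hq]
    exact Finset.prod_ne_zero_iff.mpr fun j _ => Polynomial.X_sub_C_ne_zero (y j)
  have hg'0 : g' ≠ 0 := by
    intro h; rw [h, mul_zero] at hg'; exact hp0 hg'
  have hqdeg : q.natDegree = ℓ := by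
    rw [hq, Polynomial.natDegree_prod _ _ (fun j _ => Polynomial.X_sub_C_ne_zero (y j))]
    simp [Polynomial.natDegree_X_sub_C]
  have hg'deg : g'.natDegree = r - ℓ := by
    have := Polynomial.natDegree_mul hq0 hg'0
    rw [← hg', hqdeg] at this
    have hpdeg : p.natDegree = r := by
      rw [hp]; exact Polynomial.natDegree_X_pow_sub_C
    omega
  -- reverse everything
  have hrev : p.reverse = q.reverse * g'.reverse := by
    rw [hg', Polynomial.reverse_mul_of_domain]
  have hrevp : p.reverse = 1 - Polynomial.X ^ r := by
    have hpdeg : p.natDegree = r := by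
      rw [hp]; exact Polynomial.natDegree_X_pow_sub_C
    rw [Polynomial.reverse, hpdeg, hp, sub_eq_add_neg, ← Polynomial.C_neg,
      Polynomial.reflect_add, Polynomial.reflect_C, Polynomial.reflect_monomial,
      Polynomial.revAt_le (le_refl r)]
    simp only [Nat.sub_self, pow_zero, map_neg, map_one]
    ring
  have hrevq : q.reverse = ∏ j, (1 - Polynomial.C (y j) * Polynomial.X) := by
    rw [hq]
    let rev : ℂ[X] →* ℂ[X] :=
      { toFun := Polynomial.reverse
        map_one' := by simp [Polynomial.reverse]
        map_mul' := fun f g => Polynomial.reverse_mul_of_domain f g }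
    have : Polynomial.reverse (∏ j, (Polynomial.X - Polynomial.C (y j)))
        = ∏ j, Polynomial.reverse (Polynomial.X - Polynomial.C (y j)) := map_prod rev _ _
    rw [this]
    exact Finset.prod_congr rfl fun j _ => aux_reverse_X_sub_C (y j)
  set g : ℂ[X] := g'.reverse with hgdef
  have hgdeg : g.natDegree ≤ r - ℓ := hg'deg ▸ g'.reverse_natDegree_le
  -- move to power series
  set D : PowerSeries ℂ := PowerSeries.mk (fun n => if r ∣ n then (1 : ℂ) else 0) with hD
  set F : PowerSeries ℂ := ∏ j, (1 - PowerSeries.C (y j) * PowerSeries.X) with hF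
  set H : PowerSeries ℂ := ∏ j, PowerSeries.mk (fun k => y j ^ k) with hH
  have hFH : F * H = 1 := by
    rw [hF, hH, ← Finset.prod_mul_distrib]
    exact Finset.prod_eq_one fun j _ => aux_geom (y j)
  have hFg : F * (g : PowerSeries ℂ) = 1 - PowerSeries.X ^ r := by
    have hcast : ((p.reverse : ℂ[X]) : PowerSeries ℂ)
        = ((q.reverse : ℂ[X]) : PowerSeries ℂ) * ((g : ℂ[X]) : PowerSeries ℂ) := by
      rw [hrev, Polynomial.coe_mul]
    rw [hrevp, hrevq] at hcast
    rw [Polynomial.coe_sub, Polynomial.coe_one, Polynomial.coe_pow, Polynomial.coe_X] at hcast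
    rw [hF, hcast]
    congr 1
    have hcp : ((∏ j, (1 - Polynomial.C (y j) * Polynomial.X) : ℂ[X]) : PowerSeries ℂ)
        = ∏ j, ((1 - Polynomial.C (y j) * Polynomial.X : ℂ[X]) : PowerSeries ℂ) := by
      simp only [← Polynomial.coeToPowerSeries.ringHom_apply, map_prod]
    rw [hcp]
    exact (Finset.prod_congr rfl fun j _ => by
      rw [Polynomial.coe_sub, Polynomial.coe_one, Polynomial.coe_mul, Polynomial.coe_C,
        Polynomial.coe_X]).symm
  have hFgD : F * ((g : PowerSeries ℂ) * D) = 1 := by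
    rw [← mul_assoc, hFg, hD]
    exact aux_inv_one_sub_pow r hr
  have hHgD : H = (g : PowerSeries ℂ) * D := by
    calc H = (F * ((g : PowerSeries ℂ) * D)) * H := by rw [hFgD, one_mul]
    _ = ((g : PowerSeries ℂ) * D) * (F * H) := by ring
    _ = (g : PowerSeries ℂ) * D := by rw [hFH, mul_one]
  -- extract the coefficient
  rw [← aux_hsymm_coeff, ← hH, hHgD, PowerSeries.coeff_mul]
  refine Finset.sum_eq_zero fun x hx => ?_
  rw [Finset.HasAntidiagonal.mem_antidiagonal] at hx
  by_cases hx1 : r - ℓ < x.1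
  · rw [Polynomial.coeff_coe, Polynomial.coeff_eq_zero_of_natDegree_lt
      (lt_of_le_of_lt hgdeg hx1), zero_mul]
  · have hx2 : 0 < x.2 ∧ x.2 < r := by omega
    have : ¬ r ∣ x.2 := fun hd => absurd (Nat.le_of_dvd hx2.1 hd) (not_le.mpr hx2.2)
    rw [hD, PowerSeries.coeff_mk, if_neg this, mul_zero]
end

section
/- Let ζ be a primitive r-th root of unity and d ≥ 1. Then lim_{z→ζ} (1/(z^r−1)^d) · ∏_{i=1}^{dr} (z^i − 1) = (−1)^{rd−d} · r^d · d!. In particular, (ζ−1)(ζ²−1)⋯(ζ^{r−1}−1) = (−1)^{r−1}·r. -/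
open Filter

private lemma shift_prod (a m : ℕ) (f : ℕ → ℂ) :
    ∏ i ∈ Finset.Ioc a (a + m), f i = ∏ j ∈ Finset.Icc 1 m, f (a + j) := by
  induction m with
  | zero => simp
  | succ m ih =>
      rw [← Nat.add_assoc, Finset.prod_Ioc_succ_top (Nat.le_add_right a m), ih,
        show Finset.Icc 1 (m + 1) = Finset.Ioc 0 (m + 1) by rw [← Finset.Icc_add_one_left_eq_Ioc, zero_add],
        Finset.prod_Ioc_succ_top (Nat.zero_le m),
        show Finset.Ioc 0 m = Finset.Icc 1 m by rw [← Finset.Icc_add_one_left_eq_Ioc, zero_add], Nat.add_assoc]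

private lemma icc_prod_eq_range (n : ℕ) (f : ℕ → ℂ) :
    ∏ i ∈ Finset.Icc 1 n, f i = ∏ k ∈ Finset.range n, f (k + 1) := by
  rw [← Finset.Ico_add_one_right_eq_Icc, Finset.prod_Ico_eq_prod_range]
  simp [add_comm]

private lemma key_identity (r d : ℕ) (hr : 1 ≤ r) (z : ℂ) :
    ∏ i ∈ Finset.Icc 1 (d * r), (z ^ i - 1)
      = (z ^ r - 1) ^ d * (∏ k ∈ Finset.Icc 1 d, ∑ j ∈ Finset.range k, (z ^ r) ^ j)
        * ∏ k ∈ Finset.range d, ∏ j ∈ Finset.Icc 1 (r - 1), (z ^ (k * r + j) - 1) := by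
  induction d with
  | zero => simp
  | succ d ih =>
      have hsplit : ∏ i ∈ Finset.Icc 1 ((d + 1) * r), (z ^ i - 1)
          = (∏ i ∈ Finset.Icc 1 (d * r), (z ^ i - 1)) *
              ∏ i ∈ Finset.Ioc (d * r) (d * r + r), (z ^ i - 1) := by
        rw [show (d + 1) * r = d * r + r by ring,
          show Finset.Icc 1 (d * r + r) = Finset.Ioc 0 (d * r + r) by rw [← Finset.Icc_add_one_left_eq_Ioc, zero_add],
          show Finset.Icc 1 (d * r) = Finset.Ioc 0 (d * r) by rw [← Finset.Icc_add_one_left_eq_Ioc, zero_add],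
          Finset.prod_Ioc_consecutive _ (Nat.zero_le _) (Nat.le_add_right _ _)]
      have hlast : ∏ i ∈ Finset.Ioc (d * r) (d * r + r), (z ^ i - 1)
          = (∏ j ∈ Finset.Icc 1 (r - 1), (z ^ (d * r + j) - 1)) *
              ((∑ j ∈ Finset.range (d + 1), (z ^ r) ^ j) * (z ^ r - 1)) := by
        have h1 : d * r + r = (d * r + (r - 1)) + 1 := by omega
        rw [h1, Finset.prod_Ioc_succ_top (Nat.le_add_right _ _), shift_prod]
        congr 1
        have h2 : d * r + (r - 1) + 1 = r * (d + 1) := by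
          have : d * r + (r - 1) + 1 = d * r + r := by omega
          rw [this]; ring
        rw [h2, pow_mul, geom_sum_mul]
      rw [hsplit, ih, hlast,
        Finset.prod_Icc_succ_top (Nat.le_add_left 1 d), Finset.prod_range_succ]
      ring

/-- For a primitive `r`-th root of unity `ζ` and `d ≥ 1`,
`lim_{z→ζ} (1/(z^r−1)^d) ∏_{i=1}^{dr} (z^i−1) = (−1)^{rd−d} r^d d!`;
in particular `(ζ−1)(ζ²−1)⋯(ζ^{r−1}−1) = (−1)^{r−1} r`. -/
theorem stmt15 (r d : ℕ) (hr : 1 ≤ r) (hd : 1 ≤ d)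
    (ζ : ℂ) (hζ : IsPrimitiveRoot ζ r) :
    Tendsto (fun z : ℂ => (∏ i ∈ Finset.Icc 1 (d * r), (z ^ i - 1)) / (z ^ r - 1) ^ d)
        (nhdsWithin ζ {ζ}ᶜ)
        (nhds ((-1 : ℂ) ^ (r * d - d) * (r : ℂ) ^ d * (Nat.factorial d : ℂ))) ∧
      ∏ i ∈ Finset.Icc 1 (r - 1), (ζ ^ i - 1) = (-1 : ℂ) ^ (r - 1) * (r : ℂ) := by
  have hζr : ζ ^ r = 1 := hζ.pow_eq_one
  -- Part 2
  have h2 : ∏ i ∈ Finset.Icc 1 (r - 1), (ζ ^ i - 1) = (-1 : ℂ) ^ (r - 1) * (r : ℂ) := by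
    obtain ⟨n, rfl⟩ : ∃ n, r = n + 1 := ⟨r - 1, by omega⟩
    have h := hζ.prod_pow_sub_one_eq_order
    have hprod : ∏ i ∈ Finset.Icc 1 (n + 1 - 1), (ζ ^ i - 1)
        = ∏ k ∈ Finset.range n, (ζ ^ (k + 1) - 1) := by
      simp only [Nat.add_sub_cancel]
      exact icc_prod_eq_range n _
    rw [hprod, Nat.add_sub_cancel]
    have hsq : ((-1 : ℂ) ^ n) * ((-1 : ℂ) ^ n) = 1 := by
      rw [← mul_pow]; norm_num
    calc ∏ k ∈ Finset.range n, (ζ ^ (k + 1) - 1)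
        = ((-1 : ℂ) ^ n * (-1 : ℂ) ^ n) * ∏ k ∈ Finset.range n, (ζ ^ (k + 1) - 1) := by
          rw [hsq, one_mul]
      _ = (-1 : ℂ) ^ n * ((-1 : ℂ) ^ n * ∏ k ∈ Finset.range n, (ζ ^ (k + 1) - 1)) := by ring
      _ = (-1 : ℂ) ^ n * ((n : ℂ) + 1) := by rw [h]
      _ = (-1 : ℂ) ^ n * ((n + 1 : ℕ) : ℂ) := by push_cast; ring
  refine ⟨?_, h2⟩
  -- the continuous extension
  set g : ℂ → ℂ := fun z =>
    (∏ k ∈ Finset.Icc 1 d, ∑ j ∈ Finset.range k, (z ^ r) ^ j)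
      * ∏ k ∈ Finset.range d, ∏ j ∈ Finset.Icc 1 (r - 1), (z ^ (k * r + j) - 1) with hg
  have hgval : g ζ = (-1 : ℂ) ^ (r * d - d) * (r : ℂ) ^ d * (Nat.factorial d : ℂ) := by
    have e1 : ∏ k ∈ Finset.Icc 1 d, ∑ j ∈ Finset.range k, (ζ ^ r) ^ j
        = (Nat.factorial d : ℂ) := by
      have : ∀ k, ∑ j ∈ Finset.range k, (ζ ^ r) ^ j = (k : ℂ) := by
        intro k; simp [hζr]
      rw [Finset.prod_congr rfl fun k _ => this k]
      rw [← Nat.cast_prod]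
      norm_cast
      rw [← Finset.Ico_add_one_right_eq_Icc, Finset.prod_Ico_id_eq_factorial]
    have e2 : ∀ k j : ℕ, ζ ^ (k * r + j) = ζ ^ j := by
      intro k j
      rw [pow_add, mul_comm k r, pow_mul, hζr, one_pow, one_mul]
    have e3 : ∏ k ∈ Finset.range d, ∏ j ∈ Finset.Icc 1 (r - 1), (ζ ^ (k * r + j) - 1)
        = ((-1 : ℂ) ^ (r - 1) * (r : ℂ)) ^ d := by
      have : ∀ k ∈ Finset.range d, ∏ j ∈ Finset.Icc 1 (r - 1), (ζ ^ (k * r + j) - 1)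
          = (-1 : ℂ) ^ (r - 1) * (r : ℂ) := by
        intro k _
        rw [Finset.prod_congr rfl fun j _ => by rw [e2 k j], h2]
      rw [Finset.prod_congr rfl this, Finset.prod_const, Finset.card_range]
    rw [hg]
    simp only [e1, e3]
    rw [mul_pow, ← pow_mul]
    have : (r - 1) * d = r * d - d := by
      have := Nat.sub_mul r 1 d; omega
    rw [this]; ring
  -- the functions agree on a punctured neighborhood
  have hfin : ({z : ℂ | z ^ r = 1} \ {ζ}).Finite := by
    apply Set.Finite.diff
    have hp : (Polynomial.X ^ r - Polynomial.C (1 : ℂ)) ≠ 0 :=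
      Polynomial.X_pow_sub_C_ne_zero (by omega) 1
    have := Polynomial.finite_setOf_isRoot hp
    convert this using 1
    ext z
    simp [Polynomial.IsRoot, sub_eq_zero]
  have hmem : ∀ᶠ z in nhdsWithin ζ {ζ}ᶜ, z ^ r ≠ 1 := by
    have hcl : IsClosed ({z : ℂ | z ^ r = 1} \ {ζ}) := hfin.isClosed
    have hζmem : ζ ∈ ({z : ℂ | z ^ r = 1} \ {ζ})ᶜ := by simp
    have hopen : ∀ᶠ z in nhds ζ, z ∈ ({z : ℂ | z ^ r = 1} \ {ζ})ᶜ :=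
      hcl.isOpen_compl.mem_nhds hζmem
    filter_upwards [eventually_nhdsWithin_of_eventually_nhds hopen,
      self_mem_nhdsWithin] with z hz hz'
    intro hzr
    exact hz ⟨hzr, hz'⟩
  have heq : (fun z : ℂ => (∏ i ∈ Finset.Icc 1 (d * r), (z ^ i - 1)) / (z ^ r - 1) ^ d)
      =ᶠ[nhdsWithin ζ {ζ}ᶜ] g := by
    filter_upwards [hmem] with z hz
    have hne : (z ^ r - 1) ^ d ≠ 0 := pow_ne_zero _ (sub_ne_zero.mpr hz)
    rw [key_identity r d hr z, hg]
    field_simp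
  have hgc : Continuous g := by
    rw [hg]; fun_prop
  rw [← hgval]
  exact ((hgc.continuousAt.tendsto).mono_left nhdsWithin_le_nhds).congr' heq.symm
end

section
/- Let λ be a partition contained in the k×(n−k) rectangle, and let w_λ ∈ S_n be the associated Grassmannian permutation with descent at k (so λ_i = w_λ(k−i+1) − (k−i+1) for 1 ≤ i ≤ k). Let μ ⊇ λ be a partition in the same rectangle such that μ/λ is a rim hook (connected skew shape with no 2×2 square). Then the height of μ/λ (one less than its number of rows) equals ht_k(w_λ⁻¹ w_μ) = #{i ≤ k : w_λ(i) ≠ w_μ(i)} − 1. -/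
/-- `w` is the Grassmannian permutation of the partition `lam` (inside the
`k×(n−k)` rectangle, `lam 0 = λ_1 ≥ lam 1 = λ_2 ≥ …`) with descent at `k`:
in 0-indexed terms, for positions `p < k` one has
`w(p) = λ_{k−p} + p` (i.e. 1-indexed `w(k−i+1) = λ_i + (k−i+1)`), and the
remaining values occupy positions `≥ k` in increasing order. -/
def IsGrassmannian (n k : ℕ) (lam : Fin k → ℕ) (w : Equiv.Perm (Fin n)) : Prop :=
  (∀ p : Fin n, ∀ hp : p.val < k,
      (w p).val = lam ⟨k - 1 - p.val, by omega⟩ + p.val) ∧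
    ∀ p q : Fin n, k ≤ p.val → p < q → w p < w q

/-- `mu/lam` is a rim hook (border strip): `lam ⊆ mu`, the skew shape is
nonempty, its nonempty rows are contiguous, and consecutive nonempty rows
overlap in exactly one column (`mu_{i+1} = lam_i + 1`), i.e. the shape is
edgewise connected with no `2×2` square. -/
def IsRimHook (k : ℕ) (lam mu : Fin k → ℕ) : Prop :=
  (∀ i, lam i ≤ mu i) ∧ (∃ i, lam i < mu i) ∧
    (∀ i m j : Fin k, i ≤ m → m ≤ j → lam i < mu i → lam j < mu j → lam m < mu m) ∧
    ∀ i j : Fin k, j.val = i.val + 1 → lam i < mu i → lam j < mu j → mu j = lam i + 1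

private lemma grass_val (n k : ℕ) (hkn : k < n) (lam : Fin k → ℕ) (w : Equiv.Perm (Fin n))
    (hw : IsGrassmannian n k lam w) (i : Fin k) :
    (w ⟨k - 1 - i.val, by omega⟩).val = lam i + (k - 1 - i.val) := by
  have h := hw.1 ⟨k - 1 - i.val, by omega⟩ (by simp; omega)
  rw [h]
  have hidx : (⟨k - 1 - ((⟨k - 1 - i.val, by omega⟩ : Fin n)).val,
      by simp; omega⟩ : Fin k) = i := by
    ext; simp; omega
  rw [hidx]

/-- For a rim hook `μ/λ` inside the `k×(n−k)` rectangle, the height of `μ/λ`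
(one less than its number of rows) equals
`ht_k(w_λ⁻¹ w_μ) = #{i ≤ k : w_λ(i) ≠ w_μ(i)} − 1`. -/
theorem stmt16 (n k : ℕ) (hk : 1 ≤ k) (hkn : k < n)
    (lam mu : Fin k → ℕ) (hlam : Antitone lam) (hmu : Antitone mu)
    (hlb : ∀ i, lam i ≤ n - k) (hmb : ∀ i, mu i ≤ n - k)
    (hrim : IsRimHook k lam mu)
    (wl wm : Equiv.Perm (Fin n))
    (hwl : IsGrassmannian n k lam wl) (hwm : IsGrassmannian n k mu wm) :
    (Finset.univ.filter fun i : Fin k => lam i < mu i).card - 1 =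
      (Finset.univ.filter fun i : Fin n => i.val < k ∧ wl i ≠ wm i).card - 1 := by
  congr 1
  refine Finset.card_bij (fun (i : Fin k) _ => (⟨k - 1 - i.val, by omega⟩ : Fin n))
    ?_ ?_ ?_
  · intro i hi
    simp only [Finset.mem_filter, Finset.mem_univ, true_and] at hi ⊢
    refine ⟨by omega, ?_⟩
    intro h
    have h1 := grass_val n k hkn lam wl hwl i
    have h2 := grass_val n k hkn mu wm hwm i
    have : (wl (⟨k - 1 - i.val, by omega⟩ : Fin n)).val
        = (wm (⟨k - 1 - i.val, by omega⟩ : Fin n)).val := congrArg Fin.val h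
    omega
  · intro i hi j hj h
    simp only [Fin.mk.injEq] at h
    have hik : i.val < k := i.isLt
    have hjk : j.val < k := j.isLt
    ext; omega
  · intro p hp
    simp only [Finset.mem_filter, Finset.mem_univ, true_and] at hp
    obtain ⟨hpk, hne⟩ := hp
    refine ⟨⟨k - 1 - p.val, by omega⟩, Finset.mem_filter.2 ⟨Finset.mem_univ _, ?_⟩, ?_⟩
    · have h1 := grass_val n k hkn lam wl hwl ⟨k - 1 - p.val, by omega⟩
      have h2 := grass_val n k hkn mu wm hwm ⟨k - 1 - p.val, by omega⟩
      have hpe : (⟨k - 1 - ((⟨k - 1 - p.val, by omega⟩ : Fin k)).val, by simp; omega⟩ : Fin n)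
          = p := by ext; simp; omega
      rw [hpe] at h1 h2
      refine lt_of_le_of_ne (hrim.1 _) ?_
      intro h
      exact hne (Fin.ext (by omega))
    · ext; simp; omega
end

section
/- Let Λ be a partition of size rd admitting at least one standard r-rim hook tableau. Then for each divisor m of r, the number of boxes of Λ whose hook length is divisible by m equals (r/m)·d; equivalently, for each m | r, #{□ ∈ Λ : gcd(h(□), r) = m} = #{i ∈ [rd] : gcd(i, r) = m}. -/
/-- A partition, given as a weakly decreasing, eventually-zero sequence of
row lengths (`f i` = length of the `i`-th row, 0-indexed). -/
def IsPartitionN (f : ℕ → ℕ) : Prop :=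
  Antitone f ∧ ∃ N, ∀ i, N ≤ i → f i = 0

/-- `mu/lam` is a rim hook: nonempty, its nonempty rows are contiguous, and
consecutive nonempty rows overlap in exactly one column, i.e. the skew shape
is edgewise connected and contains no `2×2` square. -/
def IsRimHookN (lam mu : ℕ → ℕ) : Prop :=
  (∀ i, lam i ≤ mu i) ∧ (∃ i, lam i < mu i) ∧
    (∀ i m j : ℕ, i ≤ m → m ≤ j → lam i < mu i → lam j < mu j → lam m < mu m) ∧
    ∀ i : ℕ, lam i < mu i → lam (i + 1) < mu (i + 1) → mu (i + 1) = lam i + 1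

/-- The hook length of the box `p = (i,j)` (0-indexed) of the partition `f`:
arm `f i − j − 1`, plus leg `#{i' > i : f i' > j}`, plus one. -/
noncomputable def hookLen (f : ℕ → ℕ) (p : ℕ × ℕ) : ℕ :=
  (f p.1 - p.2) + Set.ncard {i : ℕ | p.1 < i ∧ p.2 < f i}

open Finset

lemma modCount (m x : ℕ) (hm : 0 < m) :
    ((range x).filter (fun c => m ∣ x - c)).card = x / m := by
  rw [← Finset.card_range (x / m)]
  apply Finset.card_bij' (fun c _ => (x - c) / m - 1) (fun k _ => x - (k + 1) * m)
  · intro c hc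
    simp only [mem_filter, mem_range] at hc ⊢
    obtain ⟨hcx, t, ht⟩ := hc
    have ht1 : 1 ≤ t := by rcases Nat.eq_zero_or_pos t with rfl | h; · omega
                           · exact h
    have hmt : t * m ≤ x := by rw [mul_comm]; omega
    have h2 : t ≤ x / m := (Nat.le_div_iff_mul_le hm).2 hmt
    have h3 : (x - c) / m = t := by rw [ht, Nat.mul_div_cancel_left _ hm]
    omega
  · intro k hk
    simp only [mem_filter, mem_range] at hk ⊢
    have hmk : (k + 1) * m ≤ x := (Nat.le_div_iff_mul_le hm).1 (by omega)
    have hm1 : 1 * m ≤ (k + 1) * m := Nat.mul_le_mul_right m (by omega)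
    constructor
    · omega
    · have : x - (x - (k + 1) * m) = (k + 1) * m := by omega
      rw [this]; exact dvd_mul_left m (k + 1)
  · intro c hc
    simp only [mem_filter, mem_range] at hc
    obtain ⟨hcx, t, ht⟩ := hc
    have ht1 : 1 ≤ t := by rcases Nat.eq_zero_or_pos t with rfl | h; · omega
                           · exact h
    have h3 : (x - c) / m = t := by rw [ht, Nat.mul_div_cancel_left _ hm]
    rw [h3]
    have h4 : t - 1 + 1 = t := by omega
    rw [h4, mul_comm]; omega
  · intro k hk
    simp only [mem_range] at hk
    have hmk : (k + 1) * m ≤ x := (Nat.le_div_iff_mul_le hm).1 (by omega)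
    have : x - (x - (k + 1) * m) = (k + 1) * m := by omega
    rw [this, Nat.mul_div_cancel _ hm]
    omega

def gapCount (m : ℕ) (B : Finset ℕ) (x : ℕ) : ℕ :=
  ((range x).filter (fun c => c ∉ B ∧ m ∣ x - c)).card

def inCount (m : ℕ) (B : Finset ℕ) (x : ℕ) : ℕ :=
  ((range x).filter (fun c => c ∈ B ∧ m ∣ x - c)).card

def TT (m : ℕ) (B : Finset ℕ) : ℕ := ∑ x ∈ B, gapCount m B x

def QQ (m : ℕ) (B : Finset ℕ) : ℕ :=
  ((B ×ˢ B).filter (fun p => p.2 < p.1 ∧ m ∣ p.1 - p.2)).card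

lemma gap_add_in (m : ℕ) (B : Finset ℕ) (x : ℕ) (hm : 0 < m) :
    gapCount m B x + inCount m B x = x / m := by
  rw [← modCount m x hm, gapCount, inCount]
  have h1 : (range x).filter (fun c => c ∉ B ∧ m ∣ x - c)
      = ((range x).filter (fun c => m ∣ x - c)).filter (fun c => ¬ c ∈ B) := by
    rw [Finset.filter_filter]; apply Finset.filter_congr; intro c _; tauto
  have h2 : (range x).filter (fun c => c ∈ B ∧ m ∣ x - c)
      = ((range x).filter (fun c => m ∣ x - c)).filter (fun c => c ∈ B) := by
    rw [Finset.filter_filter]; apply Finset.filter_congr; intro c _; tauto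
  rw [h1, h2, add_comm]
  exact Finset.card_filter_add_card_filter_not _

lemma QQ_eq_sum (m : ℕ) (B : Finset ℕ) : QQ m B = ∑ x ∈ B, inCount m B x := by
  rw [QQ, Finset.card_filter, Finset.sum_product]
  apply Finset.sum_congr rfl
  intro x _
  rw [inCount, Finset.card_filter]
  rw [← Finset.sum_filter, ← Finset.sum_filter]
  congr 1
  ext c
  simp only [mem_filter, mem_range]
  tauto

lemma TT_add_QQ (m : ℕ) (B : Finset ℕ) (hm : 0 < m) :
    TT m B + QQ m B = ∑ x ∈ B, x / m := by
  rw [TT, QQ_eq_sum, ← Finset.sum_add_distrib]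
  exact Finset.sum_congr rfl fun x _ => gap_add_in m B x hm

section Move

variable {m r b : ℕ} {B : Finset ℕ}

lemma dmove1 (hmr : m ∣ r) {x : ℕ} (hx1 : b < x) (hx2 : x < b + r) :
    m ∣ x - b ↔ m ∣ (b + r) - x := by
  constructor
  · intro h; have e : (b + r) - x = r - (x - b) := by omega
    rw [e]; exact Nat.dvd_sub hmr h
  · intro h; have e : x - b = r - ((b + r) - x) := by omega
    rw [e]; exact Nat.dvd_sub hmr h

lemma dmove2 (hmr : m ∣ r) {x : ℕ} (hx : b + r < x) :
    m ∣ x - b ↔ m ∣ x - (b + r) := by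
  constructor
  · intro h; have e : x - (b + r) = (x - b) - r := by omega
    rw [e]; exact Nat.dvd_sub h hmr
  · intro h; have e : x - b = (x - (b + r)) + r := by omega
    rw [e]; exact dvd_add h hmr

lemma dmove3 (hmr : m ∣ r) {y : ℕ} (hy : y < b) :
    m ∣ b - y ↔ m ∣ (b + r) - y := by
  constructor
  · intro h; have e : (b + r) - y = (b - y) + r := by omega
    rw [e]; exact dvd_add h hmr
  · intro h; have e : b - y = ((b + r) - y) - r := by omega
    rw [e]; exact Nat.dvd_sub h hmr

lemma memB' {x : ℕ} : x ∈ insert (b + r) (B.erase b) ↔ x = b + r ∨ (x ∈ B ∧ x ≠ b) := by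
  simp only [Finset.mem_insert, Finset.mem_erase]; tauto

lemma QQ_move (hm : 0 < m) (hr : 0 < r) (hmr : m ∣ r) (hb : b ∈ B) (hbr : b + r ∉ B) :
    QQ m (insert (b + r) (B.erase b)) = QQ m B := by
  set B' := insert (b + r) (B.erase b) with hB'
  have hbnB' : b ∉ B' := by
    rw [memB']; push_neg; exact ⟨by omega, fun _ => rfl⟩
  rw [QQ, QQ]
  apply Finset.card_bij'
    (i := fun p _ => if p.1 = b + r then (if b < p.2 then (p.2, b) else (b, p.2))
        else if p.2 = b + r then (p.1, b) else p)
    (j := fun p _ => if p.2 = b then (if p.1 < b + r then (b + r, p.1) else (p.1, b + r))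
        else if p.1 = b then (b + r, p.2) else p)
  · -- hi : maps S(B') to S(B)
    rintro ⟨u, v⟩ hp
    simp only [Finset.mem_filter, Finset.mem_product] at hp ⊢
    obtain ⟨⟨hu, hv⟩, hvu, hdvd⟩ := hp
    rw [memB'] at hu hv
    split_ifs with h1 h2
    · -- u = b+r, b < v
      subst h1
      rcases hv with hv | ⟨hv, hv2⟩
      · omega
      · exact ⟨⟨hv, hb⟩, h2, (dmove1 hmr h2 hvu).2 hdvd⟩
    · -- u = b+r, v ≤ b hence v < b
      subst h1
      rcases hv with hv | ⟨hv, hv2⟩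
      · omega
      · have hvb : v < b := by omega
        exact ⟨⟨hb, hv⟩, hvb, (dmove3 hmr hvb).2 hdvd⟩
    · -- u ≠ b+r, v = b+r
      rename_i h2
      subst h2
      rcases hu with hu | ⟨hu, hu2⟩
      · omega
      · exact ⟨⟨hu, hb⟩, by omega, (dmove2 hmr (by omega)).2 hdvd⟩
    · -- identity
      rename_i h2
      rcases hu with hu | ⟨hu, _⟩
      · omega
      rcases hv with hv | ⟨hv, _⟩
      · omega
      exact ⟨⟨hu, hv⟩, hvu, hdvd⟩
  · -- hj : maps S(B) to S(B')
    rintro ⟨x, y⟩ hp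
    simp only [Finset.mem_filter, Finset.mem_product] at hp ⊢
    obtain ⟨⟨hx, hy⟩, hyx, hdvd⟩ := hp
    have hxne : x ≠ b + r := fun h => hbr (h ▸ hx)
    have hyne : y ≠ b + r := fun h => hbr (h ▸ hy)
    split_ifs with h1 h2
    · -- y = b, x < b+r
      rw [h1] at hyx hdvd
      refine ⟨⟨memB'.2 (Or.inl rfl), memB'.2 (Or.inr ⟨hx, by omega⟩)⟩, h2,
        (dmove1 hmr hyx h2).1 hdvd⟩
    · -- y = b, x > b+r
      rw [h1] at hyx hdvd
      have hxgt : b + r < x := by omega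
      refine ⟨⟨memB'.2 (Or.inr ⟨hx, by omega⟩), memB'.2 (Or.inl rfl)⟩, hxgt,
        (dmove2 hmr hxgt).1 hdvd⟩
    · -- x = b, y ≠ b
      rename_i h2
      rw [h2] at hyx hdvd
      have hyb : y < b := hyx
      refine ⟨⟨memB'.2 (Or.inl rfl), memB'.2 (Or.inr ⟨hy, by omega⟩)⟩, by omega,
        (dmove3 hmr hyb).1 hdvd⟩
    · rename_i h2
      exact ⟨⟨memB'.2 (Or.inr ⟨hx, h2⟩), memB'.2 (Or.inr ⟨hy, h1⟩)⟩, hyx, hdvd⟩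
  · -- left_inv
    rintro ⟨u, v⟩ hp
    simp only [Finset.mem_filter, Finset.mem_product] at hp
    obtain ⟨⟨hu, hv⟩, hvu, hdvd⟩ := hp
    rw [memB'] at hu hv
    have hune : u ≠ b := by
      rcases hu with h | ⟨_, h⟩
      · omega
      · exact h
    have hvne : v ≠ b := by
      rcases hv with h | ⟨_, h⟩
      · omega
      · exact h
    clear hu hv hdvd hb hbr hbnB'
    split_ifs <;> simp_all <;> omega
  · -- right_inv
    rintro ⟨x, y⟩ hp
    simp only [Finset.mem_filter, Finset.mem_product] at hp
    obtain ⟨⟨hx, hy⟩, hyx, hdvd⟩ := hp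
    have hxne : x ≠ b + r := fun h => hbr (h ▸ hx)
    have hyne : y ≠ b + r := fun h => hbr (h ▸ hy)
    clear hx hy hdvd hb hbr hbnB'
    split_ifs <;> simp_all <;> omega

end Move

lemma sumdiv_move {m r b : ℕ} {B : Finset ℕ} (hm : 0 < m) (hmr : m ∣ r) (hb : b ∈ B)
    (hbr : b + r ∉ B) :
    ∑ x ∈ insert (b + r) (B.erase b), x / m = (∑ x ∈ B, x / m) + r / m := by
  obtain ⟨k, hk⟩ := hmr
  have h1 : b + r ∉ B.erase b := fun h => hbr (Finset.mem_of_mem_erase h)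
  rw [Finset.sum_insert h1]
  have h2 : (b + r) / m = b / m + r / m := by
    subst hk
    rw [Nat.mul_div_cancel_left _ hm, Nat.add_mul_div_left _ _ hm]
  have h3 : b / m + ∑ x ∈ B.erase b, x / m = ∑ x ∈ B, x / m := Finset.add_sum_erase B (fun x => x / m) hb
  omega

lemma TT_move {m r b : ℕ} {B : Finset ℕ} (hm : 0 < m) (hr : 0 < r) (hmr : m ∣ r)
    (hb : b ∈ B) (hbr : b + r ∉ B) :
    TT m (insert (b + r) (B.erase b)) = TT m B + r / m := by
  have h1 := TT_add_QQ m (insert (b + r) (B.erase b)) hm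
  have h2 := TT_add_QQ m B hm
  have h3 := QQ_move hm hr hmr hb hbr
  have h4 := sumdiv_move hm hmr hb hbr
  omega

def beadSet (f : ℕ → ℕ) (N : ℕ) : Finset ℕ :=
  (range (N + 1)).image (fun i => f i + (N - i))

lemma beta_lt {f : ℕ → ℕ} (hf : Antitone f) {i j N : ℕ} (hij : i < j) (hj : j ≤ N) :
    f j + (N - j) < f i + (N - i) := by
  have := hf (le_of_lt hij)
  omega

lemma mem_beadSet {f : ℕ → ℕ} {N x : ℕ} :
    x ∈ beadSet f N ↔ ∃ i, i ≤ N ∧ f i + (N - i) = x := by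
  simp only [beadSet, Finset.mem_image, Finset.mem_range, Nat.lt_succ_iff]

lemma hook_eq (f : ℕ → ℕ) (N : ℕ) (hN : ∀ i, N ≤ i → f i = 0) (i j : ℕ) (hj : 0 < f i) :
    hookLen f (i, j) = (f i - j) + ((Finset.Ioo i N).filter (fun i' => j < f i')).card := by
  rw [hookLen]
  congr 1
  have hset : {i' : ℕ | (i, j).1 < i' ∧ (i, j).2 < f i'}
      = ↑((Finset.Ioo i N).filter (fun i' => j < f i')) := by
    ext i'
    simp only [Set.mem_setOf_eq, Finset.coe_filter, Finset.mem_Ioo, Set.mem_setOf_eq]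
    constructor
    · rintro ⟨h1, h2⟩
      have : i' < N := by
        by_contra h
        have := hN i' (by omega)
        omega
      exact ⟨⟨h1, this⟩, h2⟩
    · rintro ⟨⟨h1, _⟩, h2⟩; exact ⟨h1, h2⟩
  rw [hset, Set.ncard_coe_finset]

lemma row_eq (f : ℕ → ℕ) (hf : Antitone f) {N : ℕ} (hN : ∀ i, N ≤ i → f i = 0)
    (m : ℕ) {i : ℕ} (hi : i ≤ N) :
    ((range (f i)).filter (fun j => m ∣ hookLen f (i, j))).card
      = gapCount m (beadSet f N) (f i + (N - i)) := by
  set β := f i + (N - i) with hβ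
  set B := beadSet f N with hB
  set L := fun j => ((Finset.Ioo i N).filter (fun i' => j < f i')).card with hL
  set φ := fun j => β - hookLen f (i, j) with hφ
  -- basic facts for j < f i
  have hiN : ∀ j, j < f i → i < N := by
    intro j hj
    by_contra h
    have := hN i (by omega)
    omega
  have hkeq : ∀ j, j < f i → hookLen f (i, j) = (f i - j) + L j := by
    intro j hj
    exact hook_eq f N hN i j (by omega)
  have hLle : ∀ j, L j ≤ N - i - 1 := by
    intro j
    calc L j ≤ (Finset.Ioo i N).card := Finset.card_filter_le _ _
    _ = N - i - 1 := Nat.card_Ioo i N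
  have hh1 : ∀ j, j < f i → 1 ≤ hookLen f (i, j) := by
    intro j hj; rw [hkeq j hj]; omega
  have hhle : ∀ j, j < f i → hookLen f (i, j) + 1 ≤ β := by
    intro j hj
    have h1 := hLle j
    have h2 := hiN j hj
    rw [hkeq j hj]; omega
  have hLmono : ∀ j j', j ≤ j' → L j' ≤ L j := by
    intro j j' h
    apply Finset.card_le_card
    intro a ha
    simp only [Finset.mem_filter] at ha ⊢
    exact ⟨ha.1, by omega⟩
  have hmono : ∀ j j', j < j' → j' < f i → hookLen f (i, j') < hookLen f (i, j) := by
    intro j j' h1 h2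
    have := hLmono j j' (le_of_lt h1)
    rw [hkeq j (by omega), hkeq j' h2]
    omega
  have hinj : ∀ j ∈ range (f i), ∀ j' ∈ range (f i), φ j = φ j' → j = j' := by
    intro j hj j' hj'
    simp only [mem_range] at hj hj'
    intro h
    by_contra hne
    rcases Nat.lt_or_ge j j' with hlt | hge
    · have := hmono j j' hlt hj'
      have := hhle j hj
      have := hhle j' hj'
      simp only [hφ] at h
      omega
    · have hlt : j' < j := by omega
      have := hmono j' j hlt hj
      have := hhle j hj
      have := hhle j' hj'
      simp only [hφ] at h
      omega
  have hnotB : ∀ j, j < f i → φ j ∉ B := by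
    intro j hj hmem
    rw [hB, mem_beadSet] at hmem
    obtain ⟨i'', hi''N, hi''⟩ := hmem
    have hφlt : φ j < β := by
      have := hh1 j hj
      have := hhle j hj
      simp only [hφ]; omega
    have hii : i < i'' := by
      by_contra h
      push_neg at h
      rcases Nat.lt_or_ge i'' i with hlt | hge
      · have := beta_lt hf hlt hi
        omega
      · have : i'' = i := by omega
        subst this
        omega
    have heq : (f i'' + (N - i'')) + hookLen f (i, j) = β := by
      have := hhle j hj
      simp only [hφ] at hi''
      omega
    rw [hkeq j hj] at heq
    rcases Nat.lt_or_ge j (f i'') with hcase | hcase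
    · -- L j ≥ i'' - i
      have hsub : Finset.Ioc i i'' ⊆ (Finset.Ioo i N).filter (fun i' => j < f i') := by
        intro i' hi'
        simp only [Finset.mem_Ioc] at hi'
        have hf1 : f i'' ≤ f i' := hf hi'.2
        have hf2 : j < f i' := by omega
        have hi'N : i' < N := by
          by_contra h
          have := hN i' (by omega)
          omega
        simp only [Finset.mem_filter, Finset.mem_Ioo]
        exact ⟨⟨hi'.1, hi'N⟩, hf2⟩
      have hcard : i'' - i ≤ L j := by
        calc i'' - i = (Finset.Ioc i i'').card := (Nat.card_Ioc i i'').symm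
        _ ≤ _ := Finset.card_le_card hsub
      omega
    · -- L j ≤ i'' - i - 1
      have hsub : (Finset.Ioo i N).filter (fun i' => j < f i') ⊆ Finset.Ioo i i'' := by
        intro i' hi'
        simp only [Finset.mem_filter, Finset.mem_Ioo] at hi'
        have : i' < i'' := by
          by_contra h
          have : f i' ≤ f i'' := hf (by omega)
          omega
        simp only [Finset.mem_Ioo]
        exact ⟨hi'.1.1, this⟩
      have hcard : L j ≤ i'' - i - 1 := by
        calc L j ≤ (Finset.Ioo i i'').card := Finset.card_le_card hsub
        _ = i'' - i - 1 := Nat.card_Ioo i i''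
      omega
  -- the image of φ is exactly the set of gaps below β
  have hBfilter : (range β).filter (fun c => c ∈ B) = (Finset.Ioc i N).image (fun i'' => f i'' + (N - i'')) := by
    ext x
    simp only [Finset.mem_filter, mem_range, Finset.mem_image, Finset.mem_Ioc]
    constructor
    · rintro ⟨hxβ, hxB⟩
      rw [hB, mem_beadSet] at hxB
      obtain ⟨i'', h1, h2⟩ := hxB
      refine ⟨i'', ⟨?_, h1⟩, h2⟩
      by_contra h
      push_neg at h
      rcases Nat.lt_or_ge i'' i with hlt | hge
      · have := beta_lt hf hlt hi
        omega
      · have : i'' = i := by omega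
        subst this
        omega
    · rintro ⟨i'', ⟨h1, h2⟩, h3⟩
      have := beta_lt hf h1 h2
      exact ⟨by omega, by rw [hB, mem_beadSet]; exact ⟨i'', h2, h3⟩⟩
  have hBcard : ((range β).filter (fun c => c ∈ B)).card = N - i := by
    rw [hBfilter]
    rw [Finset.card_image_of_injOn, Nat.card_Ioc]
    intro a ha b hb hab
    simp only [Finset.coe_Ioc, Set.mem_Ioc] at ha hb
    have hab' : f a + (N - a) = f b + (N - b) := hab
    by_contra hne
    rcases Nat.lt_or_ge a b with hlt | hge
    · have := beta_lt hf hlt hb.2; omega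
    · have := beta_lt hf (by omega : b < a) ha.2; omega
  have hgapcard : ((range β).filter (fun c => c ∉ B)).card = f i := by
    have h := Finset.card_filter_add_card_filter_not (s := range β)
      (p := fun c => c ∈ B)
    simp only [Finset.card_range] at h
    omega
  have himg : (range (f i)).image φ = (range β).filter (fun c => c ∉ B) := by
    apply Finset.eq_of_subset_of_card_le
    · intro x hx
      simp only [Finset.mem_image, mem_range] at hx
      obtain ⟨j, hj, rfl⟩ := hx
      simp only [Finset.mem_filter, mem_range]
      refine ⟨?_, hnotB j hj⟩
      have := hh1 j hj
      have := hhle j hj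
      simp only [hφ]; omega
    · rw [hgapcard, Finset.card_image_of_injOn, Finset.card_range]
      intro a ha b hb hab
      exact hinj a (by simpa using ha) b (by simpa using hb) hab
  -- conclude
  have hstep1 : gapCount m B β
      = (((range β).filter (fun c => c ∉ B)).filter (fun c => m ∣ β - c)).card := by
    rw [gapCount, Finset.filter_filter]
  rw [hstep1, ← himg, Finset.filter_image, Finset.card_image_of_injOn]
  · apply Finset.card_nbij' id id
    · intro j hj
      simp only [Finset.mem_coe, Finset.mem_filter, mem_range, id_eq] at hj ⊢
      obtain ⟨hj1, hj2⟩ := hj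
      have h1 := hhle j hj1
      refine ⟨hj1, ?_⟩
      have heq : β - φ j = hookLen f (i, j) := by simp only [hφ]; omega
      rw [heq]; exact hj2
    · intro j hj
      simp only [Finset.mem_coe, Finset.mem_filter, mem_range, id_eq] at hj ⊢
      obtain ⟨hj1, hj2⟩ := hj
      have h1 := hhle j hj1
      have heq : β - φ j = hookLen f (i, j) := by simp only [hφ]; omega
      rw [heq] at hj2
      exact ⟨hj1, hj2⟩
    · intro j _; rfl
    · intro j _; rfl
  · intro a ha b hb hab
    simp only [Finset.coe_filter, Set.mem_setOf_eq, mem_range] at ha hb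
    exact hinj a (by simp [ha.1]) b (by simp [hb.1]) hab

lemma ncard_eq_card (f : ℕ → ℕ) (hf : Antitone f) {N : ℕ} (hN : ∀ i, N ≤ i → f i = 0)
    (Q : ℕ × ℕ → Prop) [DecidablePred Q] :
    Set.ncard {p : ℕ × ℕ | p.2 < f p.1 ∧ Q p}
      = (((range (N + 1)) ×ˢ (range (f 0))).filter (fun p => p.2 < f p.1 ∧ Q p)).card := by
  rw [← Set.ncard_coe_finset]
  congr 1
  ext p
  simp only [Set.mem_setOf_eq, Finset.coe_filter, Finset.mem_product, mem_range,
    Set.mem_setOf_eq]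
  constructor
  · rintro ⟨h1, h2⟩
    have hp1 : p.1 < N + 1 := by
      by_contra h
      have := hN p.1 (by omega)
      omega
    have hp2 : p.2 < f 0 := lt_of_lt_of_le h1 (hf (Nat.zero_le p.1))
    exact ⟨⟨hp1, hp2⟩, h1, h2⟩
  · rintro ⟨_, h⟩; exact h

lemma C_eq (f : ℕ → ℕ) (hf : Antitone f) {N : ℕ} (hN : ∀ i, N ≤ i → f i = 0) (m : ℕ) :
    Set.ncard {p : ℕ × ℕ | p.2 < f p.1 ∧ m ∣ hookLen f p} = TT m (beadSet f N) := by
  rw [ncard_eq_card f hf hN (fun p => m ∣ hookLen f p)]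
  have hTT : TT m (beadSet f N)
      = ∑ i ∈ range (N + 1), gapCount m (beadSet f N) (f i + (N - i)) := by
    rw [TT, beadSet]
    apply Finset.sum_image
    intro a ha b hb hab
    simp only [Finset.mem_coe, mem_range, Nat.lt_succ_iff] at ha hb
    have hab' : f a + (N - a) = f b + (N - b) := hab
    by_contra hne
    rcases Nat.lt_or_ge a b with hlt | hge
    · have := beta_lt hf hlt hb; omega
    · have := beta_lt hf (by omega : b < a) ha; omega
  rw [hTT, Finset.card_filter, Finset.sum_product]
  apply Finset.sum_congr rfl
  intro i hi
  simp only [mem_range, Nat.lt_succ_iff] at hi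
  rw [← row_eq f hf hN m hi, Finset.card_filter]
  have hfle : f i ≤ f 0 := hf (Nat.zero_le i)
  rcases Nat.lt_or_ge (f i) (f 0 + 1) with _ | _
  · rw [← Finset.sum_filter, ← Finset.sum_filter]
    congr 1
    ext j
    simp only [Finset.mem_filter, mem_range]
    constructor
    · rintro ⟨h1, h2, h3⟩; exact ⟨by omega, h3⟩
    · rintro ⟨h1, h2⟩; exact ⟨by omega, by omega, h2⟩
  · omega

lemma rimhook_beads (lam mu : ℕ → ℕ) (hlam : Antitone lam) (hmu : Antitone mu)
    (hrh : IsRimHookN lam mu) {N : ℕ} (hNmu : ∀ i, N ≤ i → mu i = 0) :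
    ∃ x s, 0 < s ∧ x ∈ beadSet lam N ∧ x + s ∉ beadSet lam N ∧
      beadSet mu N = insert (x + s) ((beadSet lam N).erase x) ∧
      (∑ᶠ i, (mu i - lam i)) = s := by
  obtain ⟨hle, ⟨i0, hi0⟩, hconv, hstep⟩ := hrh
  have hNlam : ∀ i, N ≤ i → lam i = 0 := fun i hi => by
    have h1 := hle i
    have h2 := hNmu i hi
    omega
  set F := (range N).filter (fun i => lam i < mu i) with hF
  have hFne : F.Nonempty := by
    refine ⟨i0, ?_⟩
    simp only [hF, Finset.mem_filter, mem_range]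
    have : i0 < N := by
      by_contra h
      have := hNmu i0 (by omega)
      omega
    exact ⟨this, hi0⟩
  set a := F.min' hFne with ha
  set b := F.max' hFne with hb
  have haF : a ∈ F := F.min'_mem hFne
  have hbF : b ∈ F := F.max'_mem hFne
  have hab : a ≤ b := F.min'_le b hbF
  have haN : a < N := by
    have := Finset.mem_filter.1 haF
    simpa using this.1
  have hbN : b < N := by
    have := Finset.mem_filter.1 hbF
    simpa using this.1
  have hcha : lam a < mu a := (Finset.mem_filter.1 haF).2
  have hchb : lam b < mu b := (Finset.mem_filter.1 hbF).2
  have hchg : ∀ i, a ≤ i → i ≤ b → lam i < mu i := fun i h1 h2 =>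
    hconv a i b h1 h2 hcha hchb
  have hout : ∀ i, (i < a ∨ b < i) → mu i = lam i := by
    intro i hi
    rcases Nat.lt_or_ge i N with hiN | hiN
    · by_contra hne
      have hch : lam i < mu i := by
        have := hle i
        omega
      have hiF : i ∈ F := by
        simp only [hF, Finset.mem_filter, mem_range]
        exact ⟨hiN, hch⟩
      rcases hi with hi | hi
      · have := F.min'_le i hiF
        omega
      · have := F.le_max' i hiF
        omega
    · rw [hNmu i hiN, hNlam i hiN]
  have hstep' : ∀ i, a ≤ i → i < b → mu (i + 1) = lam i + 1 := fun i h1 h2 =>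
    hstep i (hchg i h1 (by omega)) (hchg (i + 1) (by omega) (by omega))
  -- telescoping sum
  have hsum : ∀ c, a ≤ c → c ≤ b →
      (∑ i ∈ Finset.Icc a c, (mu i - lam i)) + lam c = mu a + (c - a) := by
    intro c
    induction c with
    | zero =>
      intro h1 _
      have h0 : a = 0 := by omega
      rw [h0]
      simp only [Finset.Icc_self, Finset.sum_singleton]
      have := hle 0
      omega
    | succ c ih =>
      intro h1 h2
      rcases Nat.lt_or_ge c a with hca | hca
      · -- a = c + 1
        have h0 : a = c + 1 := by omega
        rw [h0]
        simp only [Finset.Icc_self, Finset.sum_singleton]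
        have := hle (c + 1)
        omega
      · have hcb : c ≤ b := by omega
        have ihc := ih hca hcb
        rw [Finset.sum_Icc_succ_top (by omega : a ≤ c + 1)]
        have h3 := hstep' c hca (by omega)
        have h4 := hle (c + 1)
        omega
  set s := ∑ i ∈ Finset.Icc a b, (mu i - lam i) with hs
  have hsb := hsum b hab le_rfl
  have hspos : 0 < s := by
    have := hlam hab
    omega
  have hfin : (∑ᶠ i, (mu i - lam i)) = s := by
    rw [hs]
    apply finsum_eq_sum_of_support_subset
    intro i hi
    simp only [Function.mem_support] at hi
    simp only [Finset.coe_Icc, Set.mem_Icc]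
    by_contra h
    push_neg at h
    have : mu i = lam i := by
      rcases Nat.lt_or_ge i a with h1 | h1
      · exact hout i (Or.inl h1)
      · exact hout i (Or.inr (h h1))
    omega
  set x := lam b + (N - b) with hx
  have hxs : x + s = mu a + (N - a) := by omega
  refine ⟨x, s, hspos, ?_, ?_, ?_, hfin⟩
  · rw [mem_beadSet]
    exact ⟨b, by omega, rfl⟩
  · rw [mem_beadSet]
    rintro ⟨i, hiN, hieq⟩
    rw [hxs] at hieq
    rcases Nat.lt_or_ge i a with h1 | h1
    · have h2 : mu i = lam i := hout i (Or.inl h1)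
      have := beta_lt hmu h1 (by omega : a ≤ N)
      omega
    · have h2 : lam i ≤ lam a := hlam h1
      have h3 : N - i ≤ N - a := by omega
      omega
  · -- set equality
    ext y
    rw [mem_beadSet, Finset.mem_insert, Finset.mem_erase, mem_beadSet, hxs]
    constructor
    · rintro ⟨i, hiN, hieq⟩
      rcases Nat.lt_or_ge i a with h1 | h1
      · -- i < a : unchanged row
        right
        constructor
        · intro hy
          -- y = x = lam b + (N - b) but y = beta_mu i = beta_lam i > beta_lam b
          have h2 : mu i = lam i := hout i (Or.inl h1)
          have := beta_lt hlam (by omega : i < b) (by omega : b ≤ N)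
          omega
        · exact ⟨i, hiN, by rw [← hout i (Or.inl h1)]; exact hieq⟩
      · rcases Nat.lt_or_ge b i with h2 | h2
        · -- i > b : unchanged row
          right
          constructor
          · intro hy
            have h3 : mu i = lam i := hout i (Or.inr h2)
            have := beta_lt hlam h2 hiN
            omega
          · exact ⟨i, hiN, by rw [← hout i (Or.inr h2)]; exact hieq⟩
        · rcases Nat.eq_or_lt_of_le h1 with h3 | h3
          · -- i = a
            left
            rw [← h3] at hieq
            omega
          · -- a < i ≤ b
            right
            have h4 : mu i = lam (i - 1) + 1 := by
              have := hstep' (i - 1) (by omega) (by omega)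
              have hi1 : i - 1 + 1 = i := by omega
              rw [hi1] at this
              exact this
            constructor
            · intro hy
              have := beta_lt hlam (by omega : i - 1 < b) (by omega : b ≤ N)
              omega
            · refine ⟨i - 1, by omega, ?_⟩
              rw [← hieq, h4]
              omega
    · rintro (hy | ⟨hyx, i, hiN, hieq⟩)
      · exact ⟨a, by omega, by omega⟩
      · rcases Nat.lt_or_ge i a with h1 | h1
        · exact ⟨i, hiN, by rw [hout i (Or.inl h1)]; exact hieq⟩
        · rcases Nat.lt_or_ge b i with h2 | h2
          · exact ⟨i, hiN, by rw [hout i (Or.inr h2)]; exact hieq⟩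
          · -- a ≤ i ≤ b; must have i < b since y ≠ x
            have h3 : i < b := by
              rcases Nat.eq_or_lt_of_le h2 with h4 | h4
              · exfalso; apply hyx; subst h4; omega
              · omega
            refine ⟨i + 1, by omega, ?_⟩
            have h4 := hstep' i h1 h3
            rw [h4, ← hieq]
            omega

lemma C_step (lam mu : ℕ → ℕ) (hplam : IsPartitionN lam) (hpmu : IsPartitionN mu)
    (hrh : IsRimHookN lam mu) (r m : ℕ) (hsum : (∑ᶠ i, (mu i - lam i)) = r)
    (hm : m ∣ r) (hm0 : 0 < m) :
    Set.ncard {p : ℕ × ℕ | p.2 < mu p.1 ∧ m ∣ hookLen mu p}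
      = Set.ncard {p : ℕ × ℕ | p.2 < lam p.1 ∧ m ∣ hookLen lam p} + r / m := by
  obtain ⟨hmua, N, hN⟩ := hpmu
  have hNlam : ∀ i, N ≤ i → lam i = 0 := by
    intro i hi
    have h1 := hrh.1 i
    have h2 := hN i hi
    omega
  obtain ⟨x, s, hs0, hxB, hxsB, hBeq, hfs⟩ := rimhook_beads lam mu hplam.1 hmua hrh hN
  have hsr : s = r := by rw [← hfs, hsum]
  subst hsr
  rw [C_eq mu hmua hN m, C_eq lam hplam.1 hNlam m, hBeq]
  exact TT_move hm0 hs0 hm hxB hxsB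

lemma count_dvd (r d : ℕ) (hr : 1 ≤ r) (Λ : ℕ → ℕ)
    (htab : ∃ ν : Fin (d + 1) → ℕ → ℕ,
        (∀ t, IsPartitionN (ν t)) ∧ ν 0 = (fun _ => 0) ∧ ν (Fin.last d) = Λ ∧
          ∀ t : Fin d, IsRimHookN (ν t.castSucc) (ν t.succ) ∧
            (∑ᶠ i, (ν t.succ i - ν t.castSucc i)) = r)
    (m : ℕ) (hm : m ∣ r) :
    Set.ncard {p : ℕ × ℕ | p.2 < Λ p.1 ∧ m ∣ hookLen Λ p} = (r / m) * d := by
  obtain ⟨ν, hν, hν0, hνlast, hνstep⟩ := htab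
  have hm0 : 0 < m := Nat.pos_of_dvd_of_pos hm hr
  have key : ∀ k, (hk : k < d + 1) →
      Set.ncard {p : ℕ × ℕ | p.2 < ν ⟨k, hk⟩ p.1 ∧ m ∣ hookLen (ν ⟨k, hk⟩) p}
        = (r / m) * k := by
    intro k
    induction k with
    | zero =>
      intro hk
      have h0 : (⟨0, hk⟩ : Fin (d + 1)) = 0 := rfl
      rw [h0, hν0, mul_zero]
      have : {p : ℕ × ℕ | p.2 < (fun _ => (0 : ℕ)) p.1 ∧
          m ∣ hookLen (fun _ => 0) p} = ∅ := by
        ext p; simp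
      rw [this, Set.ncard_empty]
    | succ k ih =>
      intro hk
      have hkd : k < d := by omega
      obtain ⟨hrh, hsum⟩ := hνstep ⟨k, hkd⟩
      have hcast : (⟨k, hkd⟩ : Fin d).castSucc = (⟨k, by omega⟩ : Fin (d + 1)) := rfl
      have hsucc : (⟨k, hkd⟩ : Fin d).succ = (⟨k + 1, hk⟩ : Fin (d + 1)) := rfl
      rw [hcast, hsucc] at hrh hsum
      rw [C_step (ν ⟨k, by omega⟩) (ν ⟨k + 1, hk⟩) (hν _) (hν _) hrh r m hsum hm hm0]
      rw [ih (by omega)]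
      ring
  have hlast : (Fin.last d) = ⟨d, by omega⟩ := rfl
  rw [← hνlast, hlast]
  exact key d (by omega)

lemma divisor_inversion (r : ℕ) (hr : 0 < r) (a b : ℕ → ℕ)
    (h : ∀ k, k ∣ r → ∑ j ∈ r.divisors.filter (fun j => k ∣ j), a j
      = ∑ j ∈ r.divisors.filter (fun j => k ∣ j), b j) :
    ∀ k, k ∣ r → a k = b k := by
  have key : ∀ n k, k ∣ r → r ≤ k + n → a k = b k := by
    intro n
    induction n with
    | zero =>
      intro k hk hkr
      have hkr' : k = r := le_antisymm (Nat.le_of_dvd hr hk) (by omega)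
      subst hkr'
      have hset : k.divisors.filter (fun j => k ∣ j) = {k} := by
        ext j
        simp only [Finset.mem_filter, Nat.mem_divisors, Finset.mem_singleton]
        constructor
        · rintro ⟨⟨h1, _⟩, h3⟩; exact Nat.dvd_antisymm h1 h3
        · rintro rfl; exact ⟨⟨dvd_rfl, by omega⟩, dvd_rfl⟩
      have hh := h k dvd_rfl
      rw [hset] at hh
      simpa using hh
    | succ n ih =>
      intro k hk hkr
      have hkmem : k ∈ r.divisors.filter (fun j => k ∣ j) := by
        simp only [Finset.mem_filter, Nat.mem_divisors]
        exact ⟨⟨hk, by omega⟩, dvd_rfl⟩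
      have hsp := h k hk
      rw [← Finset.add_sum_erase _ a hkmem, ← Finset.add_sum_erase _ b hkmem] at hsp
      have herase : ∑ j ∈ (r.divisors.filter (fun j => k ∣ j)).erase k, a j
          = ∑ j ∈ (r.divisors.filter (fun j => k ∣ j)).erase k, b j := by
        apply Finset.sum_congr rfl
        intro j hj
        simp only [Finset.mem_erase, Finset.mem_filter, Nat.mem_divisors] at hj
        obtain ⟨hjk, ⟨hjr, _⟩, hkj⟩ := hj
        have hj0 : 0 < j := Nat.pos_of_dvd_of_pos hjr hr
        have hjge : k < j := lt_of_le_of_ne (Nat.le_of_dvd hj0 hkj) (Ne.symm hjk)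
        exact ih j hjr (by omega)
      omega
  intro k hk
  exact key r k hk (by omega)

lemma Icc_dvd_count (n k : ℕ) : ((Finset.Icc 1 n).filter (fun i => k ∣ i)).card = n / k := by
  have h : Finset.Icc 1 n = Finset.Ioc 0 n := by
    ext i
    simp only [Finset.mem_Icc, Finset.mem_Ioc]
    omega
  rw [h]
  exact Nat.Ioc_filter_dvd_card_eq_div n k


/-- If a partition `Λ` of size `rd` admits a standard `r`-rim hook tableau,
then for each divisor `m` of `r`, the number of boxes of `Λ` with hook length
divisible by `m` is `(r/m)·d`; equivalently
`#{□ ∈ Λ : gcd(h(□),r) = m} = #{i ∈ [rd] : gcd(i,r) = m}`. -/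
theorem stmt17 (r d : ℕ) (hr : 1 ≤ r) (Λ : ℕ → ℕ) (hΛ : IsPartitionN Λ)
    (hsize : ∑ᶠ i, Λ i = r * d)
    (htab : ∃ ν : Fin (d + 1) → ℕ → ℕ,
        (∀ t, IsPartitionN (ν t)) ∧ ν 0 = (fun _ => 0) ∧ ν (Fin.last d) = Λ ∧
          ∀ t : Fin d, IsRimHookN (ν t.castSucc) (ν t.succ) ∧
            (∑ᶠ i, (ν t.succ i - ν t.castSucc i)) = r)
    (m : ℕ) (hm : m ∣ r) :
    Set.ncard {p : ℕ × ℕ | p.2 < Λ p.1 ∧ m ∣ hookLen Λ p} = (r / m) * d ∧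
      Set.ncard {p : ℕ × ℕ | p.2 < Λ p.1 ∧ Nat.gcd (hookLen Λ p) r = m} =
        ((Finset.Icc 1 (r * d)).filter fun i => Nat.gcd i r = m).card := by
  have hr0 : 0 < r := hr
  constructor
  · exact count_dvd r d hr Λ htab m hm
  · obtain ⟨hanti, N, hN⟩ := hΛ
    set boxes := (range (N + 1)) ×ˢ (range (Λ 0)) with hboxes
    set A : ℕ → ℕ := fun k =>
      (boxes.filter (fun p => p.2 < Λ p.1 ∧ Nat.gcd (hookLen Λ p) r = k)).card with hA
    set Bc : ℕ → ℕ := fun k =>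
      ((Finset.Icc 1 (r * d)).filter (fun i => Nat.gcd i r = k)).card with hBc
    have hgcd_iff : ∀ (h k : ℕ), k ∣ r → (k ∣ Nat.gcd h r ↔ k ∣ h) := by
      intro h k hk
      exact ⟨fun hx => hx.trans (Nat.gcd_dvd_left h r), fun hx => Nat.dvd_gcd hx hk⟩
    have hApart : ∀ k, k ∣ r →
        ∑ j ∈ r.divisors.filter (fun j => k ∣ j), A j = (r / k) * d := by
      intro k hk
      have hstep1 : ∑ j ∈ r.divisors.filter (fun j => k ∣ j), A j
          = (boxes.filter (fun p => p.2 < Λ p.1 ∧ k ∣ hookLen Λ p)).card := by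
        simp only [hA, Finset.card_filter]
        rw [Finset.sum_comm]
        apply Finset.sum_congr rfl
        intro p _
        by_cases hc : p.2 < Λ p.1
        · simp only [hc, true_and]
          rw [Finset.sum_ite_eq]
          congr 1
          simp only [Finset.mem_filter, Nat.mem_divisors]
          rw [eq_iff_iff]
          constructor
          · rintro ⟨_, h2⟩
            exact (hgcd_iff _ k hk).1 h2
          · intro h1
            exact ⟨⟨Nat.gcd_dvd_right _ _, by omega⟩, (hgcd_iff _ k hk).2 h1⟩
        · simp [hc]
      rw [hstep1]
      rw [← ncard_eq_card Λ hanti hN (fun p => k ∣ hookLen Λ p)]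
      exact count_dvd r d hr Λ htab k hk
    have hBpart : ∀ k, k ∣ r →
        ∑ j ∈ r.divisors.filter (fun j => k ∣ j), Bc j = (r / k) * d := by
      intro k hk
      have hstep1 : ∑ j ∈ r.divisors.filter (fun j => k ∣ j), Bc j
          = ((Finset.Icc 1 (r * d)).filter (fun i => k ∣ i)).card := by
        simp only [hBc, Finset.card_filter]
        rw [Finset.sum_comm]
        apply Finset.sum_congr rfl
        intro i _
        rw [Finset.sum_ite_eq]
        congr 1
        simp only [Finset.mem_filter, Nat.mem_divisors]
        rw [eq_iff_iff]
        constructor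
        · rintro ⟨_, h2⟩
          exact (hgcd_iff _ k hk).1 h2
        · intro h1
          exact ⟨⟨Nat.gcd_dvd_right _ _, by omega⟩, (hgcd_iff _ k hk).2 h1⟩
      rw [hstep1, Icc_dvd_count]
      obtain ⟨u, hu⟩ := hk
      have hk0 : 0 < k := by
        rcases Nat.eq_zero_or_pos k with h | h
        · subst h; omega
        · exact h
      subst hu
      rw [mul_assoc, Nat.mul_div_cancel_left _ hk0, Nat.mul_div_cancel_left _ hk0]
    have hfinal : A m = Bc m := by
      apply divisor_inversion r hr0 A Bc ?_ m hm
      intro k hk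
      rw [hApart k hk, hBpart k hk]
    rw [ncard_eq_card Λ hanti hN (fun p => Nat.gcd (hookLen Λ p) r = m)]
    exact hfinal
end
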